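/- In the presented group G₄ = ⟨R₁, R₂, R₃ | R₁R₂R₁ = R₂R₁R₂, R₂R₃R₂ = R₃R₂R₃, R₁R₃ = R₃R₁, R₁² = R₂R₁²R₂⟩, one has (R₁R₂R₃)⁴ = R₁² R₃⁻², and consequently the elements R₁²R₃⁻² and R₁²R₃² are central elements of G₄ distinct from R₁⁴. -/

import Mathlib

/-- The relators of the presentation
`⟨R₁, R₂, R₃ | R₁R₂R₁ = R₂R₁R₂, R₂R₃R₂ = R₃R₂R₃, R₁R₃ = R₃R₁, R₁² = R₂R₁²R₂⟩`,
as elements of the free group on three generators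
`R₁ = FreeGroup.of 0`, `R₂ = FreeGroup.of 1`, `R₃ = FreeGroup.of 2`. -/
def spinOct4Rels : Set (FreeGroup (Fin 3)) :=
  { (FreeGroup.of 0 * FreeGroup.of 1 * FreeGroup.of 0) *
      (FreeGroup.of 1 * FreeGroup.of 0 * FreeGroup.of 1)⁻¹,
    (FreeGroup.of 1 * FreeGroup.of 2 * FreeGroup.of 1) *
      (FreeGroup.of 2 * FreeGroup.of 1 * FreeGroup.of 2)⁻¹,
    (FreeGroup.of 0 * FreeGroup.of 2) * (FreeGroup.of 2 * FreeGroup.of 0)⁻¹,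
    (FreeGroup.of 0) ^ 2 * (FreeGroup.of 1 * (FreeGroup.of 0) ^ 2 * FreeGroup.of 1)⁻¹ }

namespace SpinOct4Aux

abbrev G4 : Type := PresentedGroup spinOct4Rels

noncomputable def a : G4 := PresentedGroup.of 0
noncomputable def b : G4 := PresentedGroup.of 1
noncomputable def c : G4 := PresentedGroup.of 2

lemma mk_of (i : Fin 3) :
    PresentedGroup.mk spinOct4Rels (FreeGroup.of i) = PresentedGroup.of i := rfl

lemma relEq {x y : FreeGroup (Fin 3)} (h : x * y⁻¹ ∈ spinOct4Rels) :
    PresentedGroup.mk spinOct4Rels x = PresentedGroup.mk spinOct4Rels y := by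
  have h1 : PresentedGroup.mk spinOct4Rels (x * y⁻¹) = 1 :=
    (QuotientGroup.eq_one_iff _).mpr (Subgroup.subset_normalClosure h)
  rw [map_mul, map_inv, mul_inv_eq_one] at h1
  exact h1

lemma h1 : a * b * a = b * a * b := by
  have := relEq (x := .of 0 * .of 1 * .of 0) (y := .of 1 * .of 0 * .of 1)
    (Set.mem_insert _ _)
  simpa only [map_mul, mk_of, a, b, c] using this

lemma h2 : b * c * b = c * b * c := by
  have := relEq (x := .of 1 * .of 2 * .of 1) (y := .of 2 * .of 1 * .of 2)
    (Set.mem_insert_of_mem _ (Set.mem_insert _ _))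
  simpa only [map_mul, mk_of, a, b, c] using this

lemma h3 : a * c = c * a := by
  have := relEq (x := .of 0 * .of 2) (y := .of 2 * .of 0)
    (Set.mem_insert_of_mem _ (Set.mem_insert_of_mem _ (Set.mem_insert _ _)))
  simpa only [map_mul, mk_of, a, b, c] using this

lemma h4 : a * a = b * (a * a) * b := by
  have := relEq (x := (.of 0) ^ 2) (y := .of 1 * (.of 0) ^ 2 * .of 1)
    (Set.mem_insert_of_mem _ (Set.mem_insert_of_mem _
      (Set.mem_insert_of_mem _ (Set.mem_singleton _))))
  simpa only [map_mul, map_pow, mk_of, pow_two, a, b, c] using this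

lemma h3c : c⁻¹ * a = a * c⁻¹ := by
  calc c⁻¹ * a = c⁻¹ * (a * c) * c⁻¹ := by group
    _ = c⁻¹ * (c * a) * c⁻¹ := by rw [h3]
    _ = a * c⁻¹ := by group

-- variants of h4 (x = a*a)
lemma p1 : (a * a) * b⁻¹ = b * (a * a) := by
  conv_lhs => rw [h4]
  group

lemma p2 : b⁻¹ * (a * a) = (a * a) * b := by
  conv_lhs => rw [h4]
  group

lemma p3 : b * (a * a) = (a * a) * b⁻¹ := by
  conv_rhs => rw [h4]
  group

lemma p4 : (a * a) * b = b⁻¹ * (a * a) := by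
  conv_rhs => rw [h4]
  group

-- b² = a b² a
lemma q1 : a * b * a * b⁻¹ * a⁻¹ = b := by
  calc a * b * a * b⁻¹ * a⁻¹ = (a * b * a) * (b⁻¹ * a⁻¹) := by group
    _ = (b * a * b) * (b⁻¹ * a⁻¹) := by rw [h1]
    _ = b := by group

lemma q2 : a * b * ((a * a) * b⁻¹) * a⁻¹ = b * b := by
  calc a * b * ((a * a) * b⁻¹) * a⁻¹
      = (a * b * a * b⁻¹ * a⁻¹) * (a * b * a * b⁻¹ * a⁻¹) := by group
    _ = b * b := by rw [q1]

lemma d2 : a * (b * b) * a = b * b := by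
  calc a * (b * b) * a = a * b * (b * (a * a)) * a⁻¹ := by group
    _ = a * b * ((a * a) * b⁻¹) * a⁻¹ := by rw [p3]
    _ = b * b := q2

lemma p5 : (b * b) * a = a⁻¹ * (b * b) := by
  conv_rhs => rw [← d2]
  group

lemma p6 : (b * b) * a⁻¹ = a * (b * b) := by
  conv_lhs => rw [← d2]
  group

-- conjugation by d = a*b*c
lemma r1 : (a * b * c) * a = b * (a * b * c) := by
  calc (a * b * c) * a = a * b * (c * a) := by group
    _ = a * b * (a * c) := by rw [← h3]
    _ = (a * b * a) * c := by group
    _ = (b * a * b) * c := by rw [h1]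
    _ = b * (a * b * c) := by group

lemma r2 : (a * b * c) * b = c * (a * b * c) := by
  calc (a * b * c) * b = a * (b * c * b) := by group
    _ = a * (c * b * c) := by rw [h2]
    _ = (a * c) * (b * c) := by group
    _ = (c * a) * (b * c) := by rw [h3]
    _ = c * (a * b * c) := by group

lemma r1' : a * (a * b * c)⁻¹ = (a * b * c)⁻¹ * b := by
  calc a * (a * b * c)⁻¹
      = (a * b * c)⁻¹ * ((a * b * c) * a) * (a * b * c)⁻¹ := by group
    _ = (a * b * c)⁻¹ * (b * (a * b * c)) * (a * b * c)⁻¹ := by rw [r1]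
    _ = (a * b * c)⁻¹ * b := by group

lemma t1 : (c * c) * (a * b * c) = (a * b * c) * (b * b) := by
  calc (c * c) * (a * b * c) = c * (c * (a * b * c)) := by group
    _ = c * ((a * b * c) * b) := by rw [← r2]
    _ = (c * (a * b * c)) * b := by group
    _ = ((a * b * c) * b) * b := by rw [← r2]
    _ = (a * b * c) * (b * b) := by group

-- c² = b c² b
lemma d4 : c * c = b * (c * c) * b := by
  calc c * c = ((c * c) * (a * b * c)) * (a * b * c)⁻¹ := by group
    _ = ((a * b * c) * (b * b)) * (a * b * c)⁻¹ := by rw [t1]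
    _ = ((a * b * c) * (a * (b * b) * a)) * (a * b * c)⁻¹ := by rw [d2]
    _ = ((a * b * c) * a) * (b * b) * (a * (a * b * c)⁻¹) := by group
    _ = (b * (a * b * c)) * (b * b) * (a * (a * b * c)⁻¹) := by rw [r1]
    _ = (b * (a * b * c)) * (b * b) * ((a * b * c)⁻¹ * b) := by rw [r1']
    _ = b * (((a * b * c) * (b * b)) * (a * b * c)⁻¹) * b := by group
    _ = b * (((c * c) * (a * b * c)) * (a * b * c)⁻¹) * b := by rw [← t1]
    _ = b * (c * c) * b := by group

-- variants of d4 (y = c*c)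
lemma q1c : (c * c) * b⁻¹ = b * (c * c) := by
  conv_lhs => rw [d4]
  group

lemma q2c : b⁻¹ * (c * c) = (c * c) * b := by
  conv_lhs => rw [d4]
  group

lemma q3c : b * (c * c) = (c * c) * b⁻¹ := by
  conv_rhs => rw [d4]
  group

lemma q4c : (c * c) * b = b⁻¹ * (c * c) := by
  conv_rhs => rw [d4]
  group

-- b² = c b² c
lemma u1 : c * b * c * b⁻¹ * c⁻¹ = b := by
  calc c * b * c * b⁻¹ * c⁻¹ = (c * b * c) * (b⁻¹ * c⁻¹) := by group
    _ = (b * c * b) * (b⁻¹ * c⁻¹) := by rw [← h2]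
    _ = b := by group

lemma u2 : c * b * ((c * c) * b⁻¹) * c⁻¹ = b * b := by
  calc c * b * ((c * c) * b⁻¹) * c⁻¹
      = (c * b * c * b⁻¹ * c⁻¹) * (c * b * c * b⁻¹ * c⁻¹) := by group
    _ = b * b := by rw [u1]

lemma d5 : c * (b * b) * c = b * b := by
  calc c * (b * b) * c = c * b * (b * (c * c)) * c⁻¹ := by group
    _ = c * b * ((c * c) * b⁻¹) * c⁻¹ := by rw [← q1c]
    _ = b * b := u2

lemma vc1 : c⁻¹ * (b * b) = (b * b) * c := by
  conv_lhs => rw [← d5]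
  group

lemma vc2 : c * (b * b) = (b * b) * c⁻¹ := by
  conv_rhs => rw [← d5]
  group

lemma p5c : (b * b) * c = c⁻¹ * (b * b) := vc1.symm

lemma p6c : (b * b) * c⁻¹ = c * (b * b) := vc2.symm

-- b⁴ = c⁴
lemma b4c : (b * b) * (b * b) = (c * c) * (c * c) := by
  calc (b * b) * (b * b)
      = (c * b * ((c * c) * b⁻¹) * c⁻¹) * (c * b * ((c * c) * b⁻¹) * c⁻¹) := by rw [u2]
    _ = c * b * ((c * c) * ((c * c) * b⁻¹)) * c⁻¹ := by group
    _ = c * b * ((c * c) * (b * (c * c))) * c⁻¹ := by rw [q1c]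
    _ = c * b * (((c * c) * b) * (c * c)) * c⁻¹ := by group
    _ = c * b * ((b⁻¹ * (c * c)) * (c * c)) * c⁻¹ := by rw [q4c]
    _ = (c * c) * (c * c) := by group

lemma binv4 : b⁻¹ * b⁻¹ * b⁻¹ * b⁻¹ = c⁻¹ * c⁻¹ * c⁻¹ * c⁻¹ := by
  calc b⁻¹ * b⁻¹ * b⁻¹ * b⁻¹ = ((b * b) * (b * b))⁻¹ := by group
    _ = ((c * c) * (c * c))⁻¹ := by rw [b4c]
    _ = c⁻¹ * c⁻¹ * c⁻¹ * c⁻¹ := by group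

-- a² moves past b⁶
lemma Xb6 : (a * a) * (b * b * b * b * b * b) =
    (b⁻¹ * b⁻¹ * b⁻¹ * b⁻¹ * b⁻¹ * b⁻¹) * (a * a) := by
  calc (a * a) * (b * b * b * b * b * b)
      = ((a * a) * b) * (b * b * b * b * b) := by group
    _ = (b⁻¹ * (a * a)) * (b * b * b * b * b) := by rw [p4]
    _ = b⁻¹ * (((a * a) * b) * (b * b * b * b)) := by group
    _ = b⁻¹ * ((b⁻¹ * (a * a)) * (b * b * b * b)) := by rw [p4]
    _ = (b⁻¹ * b⁻¹) * (((a * a) * b) * (b * b * b)) := by group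
    _ = (b⁻¹ * b⁻¹) * ((b⁻¹ * (a * a)) * (b * b * b)) := by rw [p4]
    _ = (b⁻¹ * b⁻¹ * b⁻¹) * (((a * a) * b) * (b * b)) := by group
    _ = (b⁻¹ * b⁻¹ * b⁻¹) * ((b⁻¹ * (a * a)) * (b * b)) := by rw [p4]
    _ = (b⁻¹ * b⁻¹ * b⁻¹ * b⁻¹) * (((a * a) * b) * b) := by group
    _ = (b⁻¹ * b⁻¹ * b⁻¹ * b⁻¹) * ((b⁻¹ * (a * a)) * b) := by rw [p4]
    _ = (b⁻¹ * b⁻¹ * b⁻¹ * b⁻¹ * b⁻¹) * ((a * a) * b) := by group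
    _ = (b⁻¹ * b⁻¹ * b⁻¹ * b⁻¹ * b⁻¹) * (b⁻¹ * (a * a)) := by rw [p4]
    _ = (b⁻¹ * b⁻¹ * b⁻¹ * b⁻¹ * b⁻¹ * b⁻¹) * (a * a) := by group

-- b⁻⁴ moves past a²
lemma binv4X : (b⁻¹ * b⁻¹ * b⁻¹ * b⁻¹) * (a * a) =
    (a * a) * (b * b * b * b) := by
  calc (b⁻¹ * b⁻¹ * b⁻¹ * b⁻¹) * (a * a)
      = (b⁻¹ * b⁻¹ * b⁻¹) * (b⁻¹ * (a * a)) := by group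
    _ = (b⁻¹ * b⁻¹ * b⁻¹) * ((a * a) * b) := by rw [p2]
    _ = (b⁻¹ * b⁻¹) * ((b⁻¹ * (a * a)) * b) := by group
    _ = (b⁻¹ * b⁻¹) * (((a * a) * b) * b) := by rw [p2]
    _ = b⁻¹ * ((b⁻¹ * (a * a)) * (b * b)) := by group
    _ = b⁻¹ * (((a * a) * b) * (b * b)) := by rw [p2]
    _ = (b⁻¹ * (a * a)) * (b * b * b) := by group
    _ = ((a * a) * b) * (b * b * b) := by rw [p2]
    _ = (a * a) * (b * b * b * b) := by group

-- b⁴ moves past c²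
lemma b4Y : (b * b * b * b) * (c * c) = (c * c) * (b⁻¹ * b⁻¹ * b⁻¹ * b⁻¹) := by
  calc (b * b * b * b) * (c * c)
      = (b * b * b) * (b * (c * c)) := by group
    _ = (b * b * b) * ((c * c) * b⁻¹) := by rw [q3c]
    _ = (b * b) * ((b * (c * c)) * b⁻¹) := by group
    _ = (b * b) * (((c * c) * b⁻¹) * b⁻¹) := by rw [q3c]
    _ = b * ((b * (c * c)) * (b⁻¹ * b⁻¹)) := by group
    _ = b * (((c * c) * b⁻¹) * (b⁻¹ * b⁻¹)) := by rw [q3c]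
    _ = (b * (c * c)) * (b⁻¹ * b⁻¹ * b⁻¹) := by group
    _ = ((c * c) * b⁻¹) * (b⁻¹ * b⁻¹ * b⁻¹) := by rw [q3c]
    _ = (c * c) * (b⁻¹ * b⁻¹ * b⁻¹ * b⁻¹) := by group

/-- The main identity: `(abc)⁴ = a² c⁻²`. -/
lemma main : (a * b * c) ^ 4 = (a * a) * (c⁻¹ * c⁻¹) := by
  calc (a * b * c) ^ 4
      = ((a * b * c) * (a * b * c)) * ((a * b * c) * (a * b * c)) := by
        rw [pow_succ, pow_succ, pow_succ, pow_one]; group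
    _ = (a * b * (c * a) * (b * c)) * (a * b * (c * a) * (b * c)) := by group
    _ = (a * b * (a * c) * (b * c)) * (a * b * (a * c) * (b * c)) := by rw [← h3]
    _ = ((a * b * a) * (c * b * c)) * ((a * b * a) * (c * b * c)) := by group
    _ = ((b * a * b) * (c * b * c)) * ((b * a * b) * (c * b * c)) := by rw [h1]
    _ = ((b * a * b) * (b * c * b)) * ((b * a * b) * (b * c * b)) := by rw [← h2]
    _ = (b * a * b * b * c) * (((b * b) * a) * (b * b * c * b)) := by group
    _ = (b * a * b * b * c) * ((a⁻¹ * (b * b)) * (b * b * c * b)) := by rw [p5]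
    _ = (b * a) * (((b * b) * c) * (a⁻¹ * (b * b * b * b * c * b))) := by group
    _ = (b * a) * ((c⁻¹ * (b * b)) * (a⁻¹ * (b * b * b * b * c * b))) := by rw [p5c]
    _ = (b * a * c⁻¹) * (((b * b) * a⁻¹) * (b * b * b * b * c * b)) := by group
    _ = (b * a * c⁻¹) * ((a * (b * b)) * (b * b * b * b * c * b)) := by rw [p6]
    _ = (b * a) * ((c⁻¹ * a) * (b * b * b * b * b * b * c * b)) := by group
    _ = (b * a) * ((a * c⁻¹) * (b * b * b * b * b * b * c * b)) := by rw [h3c]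
    _ = (b * (a * a)) * ((c⁻¹ * (b * b)) * (b * b * b * b * c * b)) := by group
    _ = (b * (a * a)) * (((b * b) * c) * (b * b * b * b * c * b)) := by rw [vc1]
    _ = (b * (a * a) * (b * b)) * ((c * (b * b)) * (b * b * c * b)) := by group
    _ = (b * (a * a) * (b * b)) * (((b * b) * c⁻¹) * (b * b * c * b)) := by rw [vc2]
    _ = (b * (a * a) * (b * b * b * b)) * ((c⁻¹ * (b * b)) * (c * b)) := by group
    _ = (b * (a * a) * (b * b * b * b)) * (((b * b) * c) * (c * b)) := by rw [vc1]
    _ = b * (((a * a) * (b * b * b * b * b * b)) * (c * c * b)) := by group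
    _ = b * ((((b⁻¹ * b⁻¹ * b⁻¹ * b⁻¹ * b⁻¹ * b⁻¹) * (a * a))) * (c * c * b)) := by
        rw [Xb6]
    _ = (b⁻¹ * b⁻¹ * b⁻¹ * b⁻¹ * b⁻¹) * ((a * a) * ((c * c) * b)) := by group
    _ = (b⁻¹ * b⁻¹ * b⁻¹ * b⁻¹ * b⁻¹) * ((a * a) * (b⁻¹ * (c * c))) := by rw [q4c]
    _ = (b⁻¹ * b⁻¹ * b⁻¹ * b⁻¹ * b⁻¹) * (((a * a) * b⁻¹) * (c * c)) := by group
    _ = (b⁻¹ * b⁻¹ * b⁻¹ * b⁻¹ * b⁻¹) * ((b * (a * a)) * (c * c)) := by rw [p1]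
    _ = ((b⁻¹ * b⁻¹ * b⁻¹ * b⁻¹) * (a * a)) * (c * c) := by group
    _ = ((a * a) * (b * b * b * b)) * (c * c) := by rw [binv4X]
    _ = (a * a) * ((b * b * b * b) * (c * c)) := by group
    _ = (a * a) * ((c * c) * (b⁻¹ * b⁻¹ * b⁻¹ * b⁻¹)) := by rw [b4Y]
    _ = (a * a) * ((c * c) * (c⁻¹ * c⁻¹ * c⁻¹ * c⁻¹)) := by rw [binv4]
    _ = (a * a) * (c⁻¹ * c⁻¹) := by group

-- commutation of z₁ = a²c⁻² and z₂ = a²c² with the generators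
lemma hac : Commute a c := h3

lemma za : Commute ((a * a) * (c⁻¹ * c⁻¹)) a :=
  Commute.mul_left (Commute.mul_left (Commute.refl a) (Commute.refl a))
    (Commute.mul_left hac.symm.inv_left hac.symm.inv_left)

lemma zc : Commute ((a * a) * (c⁻¹ * c⁻¹)) c :=
  Commute.mul_left (Commute.mul_left hac hac)
    (Commute.mul_left (Commute.refl c).inv_left (Commute.refl c).inv_left)

lemma wa : Commute ((a * a) * (c * c)) a :=
  Commute.mul_left (Commute.mul_left (Commute.refl a) (Commute.refl a))
    (Commute.mul_left hac.symm hac.symm)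

lemma wc : Commute ((a * a) * (c * c)) c :=
  Commute.mul_left (Commute.mul_left hac hac)
    (Commute.mul_left (Commute.refl c) (Commute.refl c))

lemma qi : (c⁻¹ * c⁻¹) * b = b⁻¹ * (c⁻¹ * c⁻¹) := by
  calc (c⁻¹ * c⁻¹) * b = (b⁻¹ * (c * c))⁻¹ := by group
    _ = ((c * c) * b)⁻¹ := by rw [q2c]
    _ = b⁻¹ * (c⁻¹ * c⁻¹) := by group

lemma zb : ((a * a) * (c⁻¹ * c⁻¹)) * b = b * ((a * a) * (c⁻¹ * c⁻¹)) := by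
  calc ((a * a) * (c⁻¹ * c⁻¹)) * b = (a * a) * ((c⁻¹ * c⁻¹) * b) := by group
    _ = (a * a) * (b⁻¹ * (c⁻¹ * c⁻¹)) := by rw [qi]
    _ = ((a * a) * b⁻¹) * (c⁻¹ * c⁻¹) := by group
    _ = (b * (a * a)) * (c⁻¹ * c⁻¹) := by rw [p1]
    _ = b * ((a * a) * (c⁻¹ * c⁻¹)) := by group

lemma wb : ((a * a) * (c * c)) * b = b * ((a * a) * (c * c)) := by
  calc ((a * a) * (c * c)) * b = (a * a) * ((c * c) * b) := by group
    _ = (a * a) * (b⁻¹ * (c * c)) := by rw [q4c]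
    _ = ((a * a) * b⁻¹) * (c * c) := by group
    _ = (b * (a * a)) * (c * c) := by rw [p1]
    _ = b * ((a * a) * (c * c)) := by group

lemma z1_central : ((a * a) * (c⁻¹ * c⁻¹)) ∈ Subgroup.center G4 := by
  have hgen : ∀ j : Fin 3,
      (PresentedGroup.of j : G4) ∈ Subgroup.centralizer {(a * a) * (c⁻¹ * c⁻¹)} := by
    intro j
    rw [Subgroup.mem_centralizer_iff]
    intro h hh
    rw [Set.mem_singleton_iff] at hh
    subst hh
    fin_cases j
    · exact za.eq
    · exact zb
    · exact zc.eq
  rw [Subgroup.mem_center_iff]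
  intro g
  exact (PresentedGroup.generated_by spinOct4Rels _ hgen g _ rfl).symm

lemma z2_central : ((a * a) * (c * c)) ∈ Subgroup.center G4 := by
  have hgen : ∀ j : Fin 3,
      (PresentedGroup.of j : G4) ∈ Subgroup.centralizer {(a * a) * (c * c)} := by
    intro j
    rw [Subgroup.mem_centralizer_iff]
    intro h hh
    rw [Set.mem_singleton_iff] at hh
    subst hh
    fin_cases j
    · exact wa.eq
    · exact wb
    · exact wc.eq
  rw [Subgroup.mem_center_iff]
  intro g
  exact (PresentedGroup.generated_by spinOct4Rels _ hgen g _ rfl).symm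

/-! ### A concrete matrix model, used to distinguish elements -/

abbrev M := Matrix (Fin 4) (Fin 4) (ZMod 17)

def mA : M := !![15, 0, 0, 0; 0, 15, 0, 0; 0, 0, 8, 0; 0, 0, 0, 8]
def mAi : M := !![8, 0, 0, 0; 0, 8, 0, 0; 0, 0, 15, 0; 0, 0, 0, 15]
def mB : M := !![3, 0, 0, 12; 0, 3, 12, 0; 0, 12, 3, 0; 12, 0, 0, 3]
def mBi : M := !![3, 0, 0, 5; 0, 3, 5, 0; 0, 5, 3, 0; 5, 0, 0, 3]
def mC : M := !![15, 0, 0, 0; 0, 8, 0, 0; 0, 0, 15, 0; 0, 0, 0, 8]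
def mCi : M := !![8, 0, 0, 0; 0, 15, 0, 0; 0, 0, 8, 0; 0, 0, 0, 15]

def uA : Mˣ := ⟨mA, mAi, by decide, by decide⟩
def uB : Mˣ := ⟨mB, mBi, by decide, by decide⟩
def uC : Mˣ := ⟨mC, mCi, by decide, by decide⟩

def fgen : Fin 3 → Mˣ := ![uA, uB, uC]

lemma fgen_rels : ∀ r ∈ spinOct4Rels, FreeGroup.lift fgen r = 1 := by
  intro r hr
  simp only [spinOct4Rels, Set.mem_insert_iff, Set.mem_singleton_iff] at hr
  rcases hr with rfl | rfl | rfl | rfl <;>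
    · rw [map_mul, map_inv, mul_inv_eq_one]
      simp only [map_mul, map_pow, FreeGroup.lift_apply_of]
      exact Units.ext (by decide)

noncomputable def φ : G4 →* Mˣ := PresentedGroup.toGroup fgen_rels

lemma φa : φ a = uA := PresentedGroup.toGroup.of fgen_rels
lemma φb : φ b = uB := PresentedGroup.toGroup.of fgen_rels
lemma φc : φ c = uC := PresentedGroup.toGroup.of fgen_rels

lemma z1_ne : (a * a) * (c⁻¹ * c⁻¹) ≠ (a * a) * (a * a) := by
  intro h
  have h' : a * a = (((a * a) * (a * a)) * c) * c := by
    calc a * a = (((a * a) * (c⁻¹ * c⁻¹)) * c) * c := by group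
      _ = (((a * a) * (a * a)) * c) * c := by rw [h]
  have h2 := congrArg φ h'
  simp only [map_mul, φa, φc] at h2
  have h3 : (mA * mA : M) = mA * mA * (mA * mA) * mC * mC := congrArg Units.val h2
  revert h3
  decide

lemma z2_ne : (a * a) * (c * c) ≠ (a * a) * (a * a) := by
  intro h
  have h2 := congrArg φ h
  simp only [map_mul, φa, φc] at h2
  have h3 : (mA * mA * (mC * mC) : M) = mA * mA * (mA * mA) := congrArg Units.val h2
  revert h3
  decide

end SpinOct4Aux

open SpinOct4Aux in
theorem stmt_15 :
    (PresentedGroup.of (rels := spinOct4Rels) 0 * PresentedGroup.of 1 *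
        PresentedGroup.of 2) ^ 4 =
      (PresentedGroup.of (rels := spinOct4Rels) 0) ^ 2 * (PresentedGroup.of 2) ^ (-2 : ℤ) ∧
    (PresentedGroup.of (rels := spinOct4Rels) 0) ^ 2 * (PresentedGroup.of 2) ^ (-2 : ℤ) ∈
      Subgroup.center (PresentedGroup spinOct4Rels) ∧
    (PresentedGroup.of (rels := spinOct4Rels) 0) ^ 2 * (PresentedGroup.of 2) ^ 2 ∈
      Subgroup.center (PresentedGroup spinOct4Rels) ∧
    (PresentedGroup.of (rels := spinOct4Rels) 0) ^ 2 * (PresentedGroup.of 2) ^ (-2 : ℤ) ≠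
      (PresentedGroup.of (rels := spinOct4Rels) 0) ^ 4 ∧
    (PresentedGroup.of (rels := spinOct4Rels) 0) ^ 2 * (PresentedGroup.of 2) ^ 2 ≠
      (PresentedGroup.of (rels := spinOct4Rels) 0) ^ 4 := by
  have e1 : (PresentedGroup.of (rels := spinOct4Rels) 0) ^ 2 *
      (PresentedGroup.of 2) ^ (-2 : ℤ) = (a * a) * (c⁻¹ * c⁻¹) := by
    show a ^ 2 * c ^ (-2 : ℤ) = _
    rw [pow_two, show ((-2 : ℤ)) = -(2 : ℤ) from rfl, zpow_neg,
      show ((2 : ℤ)) = ((2 : ℕ) : ℤ) from rfl, zpow_natCast, pow_two, mul_inv_rev]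
  have e2 : (PresentedGroup.of (rels := spinOct4Rels) 0) ^ 2 *
      (PresentedGroup.of 2) ^ 2 = (a * a) * (c * c) := by
    show a ^ 2 * c ^ 2 = _
    rw [pow_two, pow_two]
  have e3 : (PresentedGroup.of (rels := spinOct4Rels) 0) ^ 4 = (a * a) * (a * a) := by
    show a ^ 4 = _
    rw [show (4 : ℕ) = 2 + 2 from rfl, pow_add, pow_two]
  refine ⟨?_, ?_, ?_, ?_, ?_⟩
  · rw [e1]; exact main
  · rw [e1]; exact z1_central
  · rw [e2]; exact z2_central
  · rw [e1, e3]; exact z1_ne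
  · rw [e2, e3]; exact z2_ne
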